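/- Let m ≥ 1 be an integer and let ḡ, h̄ be positive reals with ḡ ≤ h̄. Then for every ρ ≥ 0: ∫₀^∞ log(1+gρ) f(g; m, ḡ) dg ≤ ∫₀^∞ log(1+hρ) f(h; m, h̄) dh, where f(·; m, μ) is the Gamma pdf with shape m and mean μ. Consequently, with only statistical channel knowledge and a fixed transmit power, the expected secrecy rate ∫∫ (log(1+gρ) − log(1+hρ)) f(g; m, ḡ) f(h; m, h̄) dg dh is ≤ 0: no positive secrecy rate is achievable when the legitimate channel is statistically no better than the eavesdropper's. -/

import Mathlib

open MeasureTheory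

/-- Gamma pdf with integer shape `m` and mean `μ` (eq. (29) of the paper). -/
noncomputable def gammaPdf (m : ℕ) (μ : ℝ) (x : ℝ) : ℝ :=
  ((m : ℝ) / μ) ^ m * x ^ (m - 1) * Real.exp (-((m : ℝ) / μ) * x) / Real.Gamma m

lemma aux_int (n : ℕ) {b : ℝ} (hb : 0 < b) :
    IntegrableOn (fun x : ℝ => x ^ n * Real.exp (-b * x)) (Set.Ioi 0) := by
  have hs : (-1 : ℝ) < (n : ℝ) := lt_of_lt_of_le (by norm_num) (Nat.cast_nonneg n)
  have h := integrableOn_rpow_mul_exp_neg_mul_rpow (s := (n : ℝ)) (p := 1) hs one_pos hb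
  refine h.congr_fun (fun x hx => ?_) measurableSet_Ioi
  dsimp only
  rw [Real.rpow_natCast, Real.rpow_one]

lemma gammaPdf_meas (m : ℕ) (μ : ℝ) (ρ : ℝ) :
    Measurable (fun x => Real.log (1 + x * ρ) * gammaPdf m μ x) := by
  unfold gammaPdf
  exact (Real.measurable_log.comp (by fun_prop)).mul (by fun_prop)

lemma gammaPdf_int (m : ℕ) (hm : 1 ≤ m) {μ : ℝ} (hμ : 0 < μ) :
    IntegrableOn (gammaPdf m μ) (Set.Ioi 0) := by
  have hb : 0 < (m : ℝ) / μ := by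
    have : (0:ℝ) < m := by exact_mod_cast hm
    positivity
  have H : IntegrableOn (fun x : ℝ => (((m : ℝ) / μ) ^ m / Real.Gamma m) *
      (x ^ (m-1) * Real.exp (-((m:ℝ)/μ) * x))) (Set.Ioi 0) :=
    (aux_int (m-1) hb).const_mul _
  refine H.congr_fun (fun x _ => ?_) measurableSet_Ioi
  unfold gammaPdf; ring

lemma gammaPdf_nonneg (m : ℕ) {μ : ℝ} (hμ : 0 < μ) {x : ℝ} (hx : 0 ≤ x) :
    0 ≤ gammaPdf m μ x := by
  unfold gammaPdf
  have h1 : (0:ℝ) ≤ ((m : ℝ) / μ) ^ m := by positivity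
  have h2 : 0 ≤ Real.Gamma (m : ℝ) := Real.Gamma_nonneg_of_nonneg (by positivity)
  positivity

lemma gammaPdf_mass (m : ℕ) (hm : 1 ≤ m) {μ : ℝ} (hμ : 0 < μ) :
    ∫ x in Set.Ioi (0:ℝ), gammaPdf m μ x = 1 := by
  have hm' : (0:ℝ) < m := by exact_mod_cast hm
  have hb : 0 < (m : ℝ) / μ := by positivity
  have key := Real.integral_rpow_mul_exp_neg_mul_Ioi (a := (m:ℝ)) hm' hb
  have hΓ : 0 < Real.Gamma (m:ℝ) := Real.Gamma_pos_of_pos hm'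
  calc ∫ x in Set.Ioi (0:ℝ), gammaPdf m μ x
      = (((m : ℝ) / μ) ^ m / Real.Gamma m) *
        ∫ x in Set.Ioi (0:ℝ), x ^ ((m:ℝ) - 1) * Real.exp (-(((m:ℝ)/μ) * x)) := by
        rw [← integral_const_mul]
        refine setIntegral_congr_fun measurableSet_Ioi (fun x _ => ?_)
        unfold gammaPdf
        rw [show ((m:ℝ) - 1) = ((m - 1 : ℕ) : ℝ) by rw [Nat.cast_sub hm]; norm_num,
          Real.rpow_natCast, neg_mul]
        ring
    _ = 1 := by
        rw [key, Real.rpow_natCast]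
        field_simp
        rw [← mul_pow, div_mul_div_comm, mul_comm (m:ℝ) μ, div_self (by positivity), one_pow]

lemma gammaPdf_scale (m : ℕ) (hm : 1 ≤ m) {c hbar : ℝ} (hc : 0 < c) (hh : 0 < hbar) (x : ℝ) :
    c * gammaPdf m (c * hbar) (c * x) = gammaPdf m hbar x := by
  obtain ⟨k, rfl⟩ : ∃ k, m = k + 1 := ⟨m - 1, (Nat.succ_pred_eq_of_pos hm).symm⟩
  have hΓ : Real.Gamma ((k+1 : ℕ) : ℝ) ≠ 0 :=
    (Real.Gamma_pos_of_pos (by positivity)).ne'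
  unfold gammaPdf
  have he : -(((k+1 : ℕ) : ℝ) / (c * hbar)) * (c * x) = -(((k+1:ℕ):ℝ) / hbar) * x := by
    field_simp
  rw [he]
  simp only [Nat.add_sub_cancel]
  field_simp
  have h1 : c * c ^ k * c⁻¹ * c⁻¹ ^ k = 1 := by rw [inv_pow]; field_simp
  linear_combination (((k + 1 : ℕ) : ℝ) * ((k + 1 : ℕ) : ℝ) ^ k * hbar⁻¹ * hbar⁻¹ ^ k * x ^ k) * h1

lemma log_gammaPdf_int (m : ℕ) (hm : 1 ≤ m) {μ ρ : ℝ} (hμ : 0 < μ) (hρ : 0 ≤ ρ) :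
    IntegrableOn (fun x => Real.log (1 + x * ρ) * gammaPdf m μ x) (Set.Ioi 0) := by
  have hm' : (0:ℝ) < m := by exact_mod_cast hm
  have hb : 0 < (m : ℝ) / μ := by positivity
  set C : ℝ := ρ * (((m:ℝ)/μ)^m / Real.Gamma m) with hC
  refine Integrable.mono'
    (g := fun x => C * (x ^ m * Real.exp (-((m:ℝ)/μ) * x)))
    ((aux_int m hb).const_mul C)
    ((gammaPdf_meas m μ ρ).aestronglyMeasurable) ?_
  filter_upwards [ae_restrict_mem measurableSet_Ioi] with x hx
  have hx0 : (0:ℝ) < x := hx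
  have hlog0 : 0 ≤ Real.log (1 + x * ρ) :=
    Real.log_nonneg (by nlinarith)
  have hpdf : 0 ≤ gammaPdf m μ x := gammaPdf_nonneg m hμ hx0.le
  rw [Real.norm_eq_abs, abs_of_nonneg (mul_nonneg hlog0 hpdf)]
  have hlog : Real.log (1 + x * ρ) ≤ x * ρ := by
    have := Real.log_le_sub_one_of_pos (x := 1 + x * ρ) (by nlinarith)
    linarith
  calc Real.log (1 + x * ρ) * gammaPdf m μ x ≤ (x * ρ) * gammaPdf m μ x := by
        exact mul_le_mul_of_nonneg_right hlog hpdf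
    _ = C * (x ^ m * Real.exp (-((m:ℝ)/μ) * x)) := by
        obtain ⟨k, rfl⟩ : ∃ k, m = k + 1 := ⟨m - 1, (Nat.succ_pred_eq_of_pos hm).symm⟩
        unfold gammaPdf
        simp only [Nat.add_sub_cancel, hC]
        field_simp
        ring

/-- For integer `m ≥ 1` and means `0 < ḡ ≤ h̄`, for every `ρ ≥ 0`,
`∫₀^∞ log(1+gρ) f(g; m, ḡ) dg ≤ ∫₀^∞ log(1+hρ) f(h; m, h̄) dh`, and consequently
the expected secrecy rate with only statistical channel knowledge
`∫₀^∞ ∫₀^∞ (log(1+gρ) − log(1+hρ)) f(g; m, ḡ) f(h; m, h̄) dh dg ≤ 0`. -/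
theorem no_secrecy_with_statistical_CSI (m : ℕ) (hm : 1 ≤ m)
    (gbar hbar : ℝ) (hgbar : 0 < gbar) (hhbar : 0 < hbar) (hle : gbar ≤ hbar)
    (ρ : ℝ) (hρ : 0 ≤ ρ) :
    (∫ g in Set.Ioi (0 : ℝ), Real.log (1 + g * ρ) * gammaPdf m gbar g)
      ≤ (∫ h in Set.Ioi (0 : ℝ), Real.log (1 + h * ρ) * gammaPdf m hbar h)
    ∧ (∫ g in Set.Ioi (0 : ℝ), ∫ h in Set.Ioi (0 : ℝ),
        (Real.log (1 + g * ρ) - Real.log (1 + h * ρ))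
          * gammaPdf m gbar g * gammaPdf m hbar h) ≤ 0 := by
  set c : ℝ := gbar / hbar with hc
  have hc0 : 0 < c := div_pos hgbar hhbar
  have hc1 : c ≤ 1 := by rw [hc, div_le_one hhbar]; exact hle
  have hgb : gbar = c * hbar := by rw [hc, div_mul_cancel₀ gbar hhbar.ne']
  -- Part 1
  have key1 : (∫ g in Set.Ioi (0 : ℝ), Real.log (1 + g * ρ) * gammaPdf m gbar g)
      ≤ (∫ h in Set.Ioi (0 : ℝ), Real.log (1 + h * ρ) * gammaPdf m hbar h) := by
    have subst := integral_comp_mul_left_Ioi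
      (fun y => Real.log (1 + y * ρ) * gammaPdf m gbar y) 0 hc0
    rw [mul_zero] at subst
    have step1 : (∫ g in Set.Ioi (0 : ℝ), Real.log (1 + g * ρ) * gammaPdf m gbar g)
        = ∫ x in Set.Ioi (0 : ℝ), Real.log (1 + c * x * ρ) * gammaPdf m hbar x := by
      calc (∫ g in Set.Ioi (0 : ℝ), Real.log (1 + g * ρ) * gammaPdf m gbar g)
          = c • ∫ x in Set.Ioi (0:ℝ),
              Real.log (1 + (c * x) * ρ) * gammaPdf m gbar (c * x) := by
            rw [subst, smul_smul, mul_inv_cancel₀ hc0.ne', one_smul]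
        _ = ∫ x in Set.Ioi (0:ℝ), Real.log (1 + c * x * ρ) * gammaPdf m hbar x := by
            rw [← integral_smul]
            refine setIntegral_congr_fun measurableSet_Ioi (fun x _ => ?_)
            rw [smul_eq_mul, ← gammaPdf_scale m hm hc0 hhbar x, ← hgb]
            ring
    rw [step1]
    refine integral_mono_of_nonneg ?_ (log_gammaPdf_int m hm hhbar hρ) ?_
    · filter_upwards [ae_restrict_mem measurableSet_Ioi] with x hx
      have hx0 : (0:ℝ) < x := hx
      have hp : 0 ≤ c * x * ρ := by positivity
      exact mul_nonneg (Real.log_nonneg (by linarith)) (gammaPdf_nonneg m hhbar hx0.le)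
    · filter_upwards [ae_restrict_mem measurableSet_Ioi] with x hx
      have hx0 : (0:ℝ) < x := hx
      have hp : 0 ≤ c * x * ρ := by positivity
      have hq : c * x * ρ ≤ x * ρ :=
        by nlinarith [mul_nonneg (mul_nonneg (sub_nonneg.mpr hc1) hx0.le) hρ]
      have : Real.log (1 + c * x * ρ) ≤ Real.log (1 + x * ρ) := by
        apply Real.log_le_log (by linarith)
        linarith
      exact mul_le_mul_of_nonneg_right this (gammaPdf_nonneg m hhbar hx0.le)
  refine ⟨key1, ?_⟩
  -- Part 2
  have mass_h := gammaPdf_mass m hm hhbar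
  have mass_g := gammaPdf_mass m hm hgbar
  have int_h := gammaPdf_int m hm hhbar
  have int_g := gammaPdf_int m hm hgbar
  have logint_h := log_gammaPdf_int m hm hhbar hρ
  have logint_g := log_gammaPdf_int m hm hgbar hρ
  set Ih : ℝ := ∫ h in Set.Ioi (0 : ℝ), Real.log (1 + h * ρ) * gammaPdf m hbar h with hIh
  have inner : ∀ g : ℝ,
      (∫ h in Set.Ioi (0 : ℝ), (Real.log (1 + g * ρ) - Real.log (1 + h * ρ))
          * gammaPdf m gbar g * gammaPdf m hbar h)
      = Real.log (1 + g * ρ) * gammaPdf m gbar g - Ih * gammaPdf m gbar g := by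
    intro g
    have e1 : (fun h => (Real.log (1 + g * ρ) - Real.log (1 + h * ρ))
          * gammaPdf m gbar g * gammaPdf m hbar h)
        = fun h => (Real.log (1 + g * ρ) * gammaPdf m gbar g) * gammaPdf m hbar h
            - gammaPdf m gbar g * (Real.log (1 + h * ρ) * gammaPdf m hbar h) :=
      funext fun h => by ring
    rw [e1, integral_sub (int_h.const_mul _) (logint_h.const_mul _),
      integral_const_mul, integral_const_mul, mass_h, ← hIh]
    ring
  have outer : (∫ g in Set.Ioi (0 : ℝ), ∫ h in Set.Ioi (0 : ℝ),
        (Real.log (1 + g * ρ) - Real.log (1 + h * ρ))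
          * gammaPdf m gbar g * gammaPdf m hbar h)
      = (∫ g in Set.Ioi (0 : ℝ), Real.log (1 + g * ρ) * gammaPdf m gbar g) - Ih := by
    calc (∫ g in Set.Ioi (0 : ℝ), ∫ h in Set.Ioi (0 : ℝ),
          (Real.log (1 + g * ρ) - Real.log (1 + h * ρ))
            * gammaPdf m gbar g * gammaPdf m hbar h)
        = ∫ g in Set.Ioi (0 : ℝ),
            (Real.log (1 + g * ρ) * gammaPdf m gbar g - Ih * gammaPdf m gbar g) := by
          exact setIntegral_congr_fun measurableSet_Ioi (fun g _ => inner g)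
      _ = (∫ g in Set.Ioi (0 : ℝ), Real.log (1 + g * ρ) * gammaPdf m gbar g)
            - Ih * ∫ g in Set.Ioi (0 : ℝ), gammaPdf m gbar g := by
          rw [integral_sub logint_g (int_g.const_mul _), integral_const_mul]
      _ = (∫ g in Set.Ioi (0 : ℝ), Real.log (1 + g * ρ) * gammaPdf m gbar g) - Ih := by
          rw [mass_g, mul_one]
  rw [outer]
  exact sub_nonpos.mpr key1
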